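/- The set of non-adjacent vertex pairs of G_Q that occur as a diagonal of some 4-belt of G_Q is exactly the eight pairs {a,g}, {c,f}, {a,j}, {d,f}, {c,j}, {d,h}, {f,h}, {g,j}. -/

import Mathlib

/-- Edge list of the facet-intersection graph `G_Q` of the polytope `𝒬`
(vertices: a=0, b=1, c=2, d=3, e=4, f=5, g=6, h=7, i=8, j=9, k=10). -/
def qEdgeList : List (Fin 11 × Fin 11) :=
  [(0,1),(0,2),(0,3),(0,4),(0,5),(1,2),(1,5),(1,6),(2,3),(2,6),(2,7),(2,8),
   (3,4),(3,8),(3,9),(4,5),(4,9),(5,6),(5,9),(5,10),(6,7),(6,10),(7,8),(7,9),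
   (7,10),(8,9),(9,10)]

/-- The facet-intersection graph `G_Q` of the polytope `𝒬`. -/
def G_Q : SimpleGraph (Fin 11) where
  Adj u v := (u, v) ∈ qEdgeList ∨ (v, u) ∈ qEdgeList
  symm := ⟨fun u v h => h.symm⟩
  loopless := ⟨by intro v; fin_cases v <;> decide⟩

instance : DecidableRel G_Q.Adj :=
  fun u v => inferInstanceAs (Decidable ((u, v) ∈ qEdgeList ∨ (v, u) ∈ qEdgeList))

/-- A 4-belt of a simple graph `G` is a 4-element vertex set that can be written as
`{w, x, y, z}` where `wx`, `xy`, `yz`, `zw` are edges of `G` while `wy`, `xz` are not. -/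
def IsFourBelt {V : Type*} (G : SimpleGraph V) (B : Set V) : Prop :=
  ∃ w x y z : V, B = {w, x, y, z} ∧ B.ncard = 4 ∧
    G.Adj w x ∧ G.Adj x y ∧ G.Adj y z ∧ G.Adj z w ∧ ¬ G.Adj w y ∧ ¬ G.Adj x z

/-- The pair `{u, v}` is a diagonal of the 4-belt `B` of `G`. -/
def IsDiagonalOfBelt {V : Type*} (G : SimpleGraph V) (u v : V) (B : Set V) : Prop :=
  ∃ w x y z : V, B = {w, x, y, z} ∧ B.ncard = 4 ∧
    G.Adj w x ∧ G.Adj x y ∧ G.Adj y z ∧ G.Adj z w ∧ ¬ G.Adj w y ∧ ¬ G.Adj x z ∧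
    (({u, v} : Set V) = {w, y} ∨ ({u, v} : Set V) = {x, z})

/-- The pair `{u, v}` is a diagonal of some 4-belt of `G`. -/
def IsBeltDiagonal {V : Type*} (G : SimpleGraph V) (u v : V) : Prop :=
  ∃ B : Set V, IsDiagonalOfBelt G u v B

/-- The 16 ordered pairs giving the eight belt diagonals. -/
def diagList : List (Fin 11 × Fin 11) :=
  [(0,6),(6,0),(2,5),(5,2),(0,9),(9,0),(3,5),(5,3),(2,9),(9,2),(3,7),(7,3),
   (5,7),(7,5),(6,9),(9,6)]

lemma key_belt : ∀ w x y z : Fin 11,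
    G_Q.Adj w x → G_Q.Adj x y → G_Q.Adj y z → G_Q.Adj z w →
    ¬ G_Q.Adj w y → ¬ G_Q.Adj x z → w ≠ y → x ≠ z →
    (w, y) ∈ diagList ∧ (x, z) ∈ diagList := by decide

lemma ncard4 (w x y z : Fin 11) (h : ({w,x,y,z} : Finset (Fin 11)).card = 4) :
    ({w,x,y,z} : Set (Fin 11)).ncard = 4 := by
  rw [show ({w,x,y,z} : Set (Fin 11)) = (({w,x,y,z} : Finset (Fin 11)) : Set (Fin 11)) by
    simp, Set.ncard_coe_finset, h]

lemma ne_of_ncard4 {w x y z : Fin 11} (h : ({w,x,y,z} : Set (Fin 11)).ncard = 4) :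
    w ≠ y ∧ x ≠ z := by
  constructor
  · rintro rfl
    have h1 : ({w,x,w,z} : Set (Fin 11)) = {w,x,z} := by
      ext t; simp; tauto
    rw [h1] at h
    have := (Set.ncard_insert_le w ({x,z} : Set (Fin 11))).trans
      (Nat.add_le_add_right (Set.ncard_insert_le x ({z} : Set (Fin 11))) 1)
    simp [Set.ncard_singleton, h] at this
  · rintro rfl
    have h1 : ({w,x,y,x} : Set (Fin 11)) = {w,x,y} := by
      ext t; simp; tauto
    rw [h1] at h
    have := (Set.ncard_insert_le w ({x,y} : Set (Fin 11))).trans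
      (Nat.add_le_add_right (Set.ncard_insert_le x ({y} : Set (Fin 11))) 1)
    simp [Set.ncard_singleton, h] at this

lemma mem_rhs_of_mem_diagList {a b : Fin 11} (h : (a, b) ∈ diagList) :
    ({a, b} : Set (Fin 11)) ∈
      ({({0, 6} : Set (Fin 11)), {2, 5}, {0, 9}, {3, 5}, {2, 9}, {3, 7}, {5, 7}, {6, 9}} :
        Set (Set (Fin 11))) := by
  simp only [diagList, List.mem_cons, List.not_mem_nil, or_false, Prod.mk.injEq] at h
  simp only [Set.mem_insert_iff, Set.mem_singleton_iff]
  rcases h with ⟨rfl,rfl⟩|⟨rfl,rfl⟩|⟨rfl,rfl⟩|⟨rfl,rfl⟩|⟨rfl,rfl⟩|⟨rfl,rfl⟩|⟨rfl,rfl⟩|⟨rfl,rfl⟩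
    |⟨rfl,rfl⟩|⟨rfl,rfl⟩|⟨rfl,rfl⟩|⟨rfl,rfl⟩|⟨rfl,rfl⟩|⟨rfl,rfl⟩|⟨rfl,rfl⟩|⟨rfl,rfl⟩ <;>
    simp [Set.pair_comm (6 : Fin 11) 0, Set.pair_comm (5 : Fin 11) 2,
      Set.pair_comm (9 : Fin 11) 0, Set.pair_comm (5 : Fin 11) 3,
      Set.pair_comm (9 : Fin 11) 2, Set.pair_comm (7 : Fin 11) 3,
      Set.pair_comm (7 : Fin 11) 5, Set.pair_comm (9 : Fin 11) 6]

lemma mk_belt (u v w x y z : Fin 11)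
    (hc : ({w,x,y,z} : Finset (Fin 11)).card = 4)
    (h1 : G_Q.Adj w x) (h2 : G_Q.Adj x y) (h3 : G_Q.Adj y z) (h4 : G_Q.Adj z w)
    (h5 : ¬ G_Q.Adj w y) (h6 : ¬ G_Q.Adj x z) (hu : u = w) (hv : v = y) :
    IsBeltDiagonal G_Q u v := by
  exact ⟨{w,x,y,z}, w, x, y, z, rfl, ncard4 w x y z hc, h1, h2, h3, h4, h5, h6,
    Or.inl (by rw [hu, hv])⟩

/-- The non-adjacent vertex pairs of `G_Q` occurring as a diagonal of some 4-belt of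
`G_Q` are exactly the eight pairs {a,g}, {c,f}, {a,j}, {d,f}, {c,j}, {d,h}, {f,h}, {g,j}. -/
theorem stmt_7 :
    {p : Set (Fin 11) | ∃ u v : Fin 11, u ≠ v ∧ ¬ G_Q.Adj u v ∧
        IsBeltDiagonal G_Q u v ∧ p = {u, v}} =
      {({0, 6} : Set (Fin 11)), {2, 5}, {0, 9}, {3, 5}, {2, 9}, {3, 7}, {5, 7}, {6, 9}} := by
  ext p
  simp only [Set.mem_setOf_eq]
  constructor
  · rintro ⟨u, v, hne, hnadj, ⟨B, w, x, y, z, rfl, hcard, h1, h2, h3, h4, h5, h6, hd⟩, rfl⟩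
    obtain ⟨hwy, hxz⟩ := ne_of_ncard4 hcard
    obtain ⟨hL1, hL2⟩ := key_belt w x y z h1 h2 h3 h4 h5 h6 hwy hxz
    rcases hd with hd | hd <;>
      rcases Set.pair_eq_pair_iff.mp hd with ⟨rfl, rfl⟩ | ⟨rfl, rfl⟩
    · exact mem_rhs_of_mem_diagList hL1
    · have := mem_rhs_of_mem_diagList hL1; rwa [Set.pair_comm v u] at this
    · exact mem_rhs_of_mem_diagList hL2
    · have := mem_rhs_of_mem_diagList hL2; rwa [Set.pair_comm v u] at this
  · intro hp
    simp only [Set.mem_insert_iff, Set.mem_singleton_iff] at hp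
    rcases hp with rfl|rfl|rfl|rfl|rfl|rfl|rfl|rfl
    · exact ⟨0, 6, by decide, by decide,
        mk_belt 0 6 0 2 6 5 (by decide) (by decide) (by decide) (by decide) (by decide)
          (by decide) (by decide) rfl rfl, rfl⟩
    · exact ⟨2, 5, by decide, by decide,
        mk_belt 2 5 2 0 5 6 (by decide) (by decide) (by decide) (by decide) (by decide)
          (by decide) (by decide) rfl rfl, rfl⟩
    · exact ⟨0, 9, by decide, by decide,
        mk_belt 0 9 0 3 9 5 (by decide) (by decide) (by decide) (by decide) (by decide)
          (by decide) (by decide) rfl rfl, rfl⟩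
    · exact ⟨3, 5, by decide, by decide,
        mk_belt 3 5 3 0 5 9 (by decide) (by decide) (by decide) (by decide) (by decide)
          (by decide) (by decide) rfl rfl, rfl⟩
    · exact ⟨2, 9, by decide, by decide,
        mk_belt 2 9 2 3 9 7 (by decide) (by decide) (by decide) (by decide) (by decide)
          (by decide) (by decide) rfl rfl, rfl⟩
    · exact ⟨3, 7, by decide, by decide,
        mk_belt 3 7 3 2 7 9 (by decide) (by decide) (by decide) (by decide) (by decide)
          (by decide) (by decide) rfl rfl, rfl⟩
    · exact ⟨5, 7, by decide, by decide,
        mk_belt 5 7 5 6 7 9 (by decide) (by decide) (by decide) (by decide) (by decide)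
          (by decide) (by decide) rfl rfl, rfl⟩
    · exact ⟨6, 9, by decide, by decide,
        mk_belt 6 9 6 5 9 7 (by decide) (by decide) (by decide) (by decide) (by decide)
          (by decide) (by decide) rfl rfl, rfl⟩
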